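/- Let 0 < α < 1 and let F be α-SR with differentiable density f and with finite mean. If v₁ and v₂ are independent random variables each with distribution F, then E[max{v₁, v₂}] ≤ ((2+α)/α) · E[min{v₁, v₂}]. Equivalently, ∫₀^∞ (1 − F(x)²) dx ≤ ((2+α)/α) · ∫₀^∞ (1 − F(x))² dx. -/

import Mathlib

open MeasureTheory Real Filter

/-- The virtual valuation function `φ(v) = v − (1 − F(v))/f(v)`. -/
noncomputable def virtualValue (F f : ℝ → ℝ) (v : ℝ) : ℝ := v - (1 - F v) / f v

/-- The hazard rate `h(v) = f(v)/(1 − F(v))`. -/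
noncomputable def hazardRate (F f : ℝ → ℝ) (v : ℝ) : ℝ := f v / (1 - F v)

/-- `F` is the CDF of a continuous distribution supported on `[0, ∞)`,
with density `f = F'` that is positive wherever `F < 1`. -/
structure IsCDF (F f : ℝ → ℝ) : Prop where
  zero : F 0 = 0
  mono : Monotone F
  le_one : ∀ v, F v ≤ 1
  tendsto_one : Tendsto F atTop (nhds 1)
  hasDeriv : ∀ v, 0 ≤ v → HasDerivAt F (f v) v
  f_pos : ∀ v, 0 ≤ v → F v < 1 → 0 < f v

/-- `F` is `α`-strongly regular: `φ(y) − φ(x) ≥ α (y − x)` for all `x < y` in the support. -/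
def IsAlphaSR (α : ℝ) (F f : ℝ → ℝ) : Prop :=
  ∀ x y, 0 ≤ x → x < y → F y < 1 →
    virtualValue F f y - virtualValue F f x ≥ α * (y - x)

/-! ### Auxiliary definitions -/

/-- The inverse hazard rate `r(v) = (1 − F(v))/f(v)`. -/
noncomputable def rr (F f : ℝ → ℝ) (v : ℝ) : ℝ := (1 - F v) / f v

/-- The potential `ψ(v) = Φ(1 − F(v))` where `Φ(q) = q^α (q − 1)/α`. -/
noncomputable def psiF (α : ℝ) (F : ℝ → ℝ) (v : ℝ) : ℝ := (1 - F v) ^ α * ((1 - F v) - 1) / α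

/-- The derivative of `psiF`. -/
noncomputable def psiD (α : ℝ) (F f : ℝ → ℝ) (v : ℝ) : ℝ :=
  -(f v * (1 - F v) ^ (α - 1) * ((1 + α) * (1 - F v) - α)) / α

/-- The monotone multiplier `M(v) = r(v) (1 − F(v))^{1−α}`. -/
noncomputable def MM (α : ℝ) (F f : ℝ → ℝ) (v : ℝ) : ℝ := rr F f v * (1 - F v) ^ (1 - α)

/-- The integrand `((1+α)/α)(1 − F)² − (1 − F)` whose integral over `(0,∞)` we show nonnegative. -/
noncomputable def cc (α : ℝ) (F : ℝ → ℝ) (v : ℝ) : ℝ := ((1 + α) / α) * (1 - F v) ^ 2 - (1 - F v)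

lemma rr_diff {α : ℝ} {F f : ℝ → ℝ} (hSR : IsAlphaSR α F f) {x y : ℝ}
    (hx : 0 ≤ x) (hxy : x < y) (hy : F y < 1) :
    rr F f y - rr F f x ≤ (1 - α) * (y - x) := by
  have h := hSR x y hx hxy hy
  unfold virtualValue at h
  unfold rr
  have h2 : (1 - α) * (y - x) = (y - x) - α * (y - x) := by ring
  linarith

lemma rderiv_le {α : ℝ} {F f : ℝ → ℝ} (hcdf : IsCDF F f) (hSR : IsAlphaSR α F f)
    {v : ℝ} (hv : 0 ≤ v) (hFv : F v < 1) {ρ : ℝ} (hρ : HasDerivAt (rr F f) ρ v) :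
    ρ ≤ 1 - α := by
  have hslope := hasDerivAt_iff_tendsto_slope.mp hρ
  have hmono : nhdsWithin v (Set.Ioi v) ≤ nhdsWithin v {v}ᶜ :=
    nhdsWithin_mono v (fun w hw => ne_of_gt hw)
  have T := hslope.mono_left hmono
  have hFc : ContinuousAt F v := (hcdf.hasDeriv v hv).continuousAt
  have hev : ∀ᶠ w in nhdsWithin v (Set.Ioi v), F w < 1 :=
    (hFc.tendsto.eventually_lt_const hFv).filter_mono nhdsWithin_le_nhds
  have hub : ∀ᶠ w in nhdsWithin v (Set.Ioi v), slope (rr F f) v w ≤ 1 - α := by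
    filter_upwards [hev, self_mem_nhdsWithin] with w hw1 hw2
    have hd := rr_diff hSR hv hw2 hw1
    rw [slope_def_field]
    rw [div_le_iff₀ (by simp at hw2; linarith)]
    linarith [hd]
  exact le_of_tendsto T hub

lemma hasDerivAt_G {F f : ℝ → ℝ} (hcdf : IsCDF F f) {v : ℝ} (hv : 0 ≤ v) :
    HasDerivAt (fun w => 1 - F w) (-(f v)) v := by
  have h := (hasDerivAt_const v (1:ℝ)).sub (hcdf.hasDeriv v hv)
  rwa [zero_sub] at h

lemma psi_hasDeriv {α : ℝ} {F f : ℝ → ℝ} (hcdf : IsCDF F f) (hα0 : 0 < α)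
    {v : ℝ} (hv : 0 ≤ v) (hFv : F v < 1) :
    HasDerivAt (psiF α F) (psiD α F f v) v := by
  have hG := hasDerivAt_G hcdf hv
  have hG0 : (1 : ℝ) - F v ≠ 0 := by linarith
  have h2 : HasDerivAt (fun w => (1 - F w) ^ α) (-(f v) * α * (1 - F v) ^ (α - 1)) v :=
    hG.rpow_const (Or.inl hG0)
  have h4 := (h2.mul (hG.sub_const 1)).div_const α
  refine h4.congr_deriv ?_
  have hp : (1 - F v) ^ α = (1 - F v) ^ (α - 1) * (1 - F v) := by
    rw [← Real.rpow_add_one hG0 (α - 1)]; norm_num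
  unfold psiD
  rw [hp]; ring

lemma MM_deriv_nonpos {α : ℝ} {F f : ℝ → ℝ} (hcdf : IsCDF F f)
    (hfd : ∀ v, 0 ≤ v → DifferentiableAt ℝ f v) (hSR : IsAlphaSR α F f)
    {v : ℝ} (hv : 0 ≤ v) (hFv : F v < 1) :
    ∃ m', HasDerivAt (MM α F f) m' v ∧ m' ≤ 0 := by
  have hG := hasDerivAt_G hcdf hv
  have hGpos : (0:ℝ) < 1 - F v := by linarith
  have hfna : f v ≠ 0 := (hcdf.f_pos v hv hFv).ne'
  have hf' := (hfd v hv).hasDerivAt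
  have hr : HasDerivAt (rr F f)
      ((-(f v) * f v - (1 - F v) * deriv f v) / f v ^ 2) v := hG.div hf' hfna
  have hρle := rderiv_le hcdf hSR hv hFv hr
  have h2 : HasDerivAt (fun w => (1 - F w) ^ (1 - α)) (-(f v) * (1 - α) * (1 - F v) ^ (1 - α - 1)) v :=
    hG.rpow_const (Or.inl hGpos.ne')
  have hM := hr.mul h2
  refine ⟨_, hM, ?_⟩
  have hrf : rr F f v * f v = 1 - F v := div_mul_cancel₀ _ hfna
  have hpow : (1 - F v) * (1 - F v) ^ (1 - α - 1) = (1 - F v) ^ (1 - α) := by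
    rw [mul_comm, ← Real.rpow_add_one hGpos.ne' (1 - α - 1)]
    congr 1; ring
  set ρ := (-(f v) * f v - (1 - F v) * deriv f v) / f v ^ 2
  have key : ρ * (1 - F v) ^ (1 - α) + rr F f v * (-(f v) * (1 - α) * (1 - F v) ^ (1 - α - 1))
      = (1 - F v) ^ (1 - α) * (ρ - (1 - α)) := by
    have : rr F f v * (-(f v) * (1 - α) * (1 - F v) ^ (1 - α - 1))
        = -((1 - α) * ((rr F f v * f v) * (1 - F v) ^ (1 - α - 1))) := by ring
    rw [this, hrf, hpow]; ring
  rw [key]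
  exact mul_nonpos_of_nonneg_of_nonpos (Real.rpow_nonneg hGpos.le _) (by linarith)

lemma cc_eq {α : ℝ} {F f : ℝ → ℝ} (hcdf : IsCDF F f) (hα0 : 0 < α)
    {v : ℝ} (hv : 0 ≤ v) (hFv : F v < 1) :
    cc α F v = -(MM α F f v * psiD α F f v) := by
  have hGpos : (0:ℝ) < 1 - F v := by linarith
  have hfna : f v ≠ 0 := (hcdf.f_pos v hv hFv).ne'
  have hrf : rr F f v * f v = 1 - F v := div_mul_cancel₀ _ hfna
  have hpow : (1 - F v) ^ (1 - α) * (1 - F v) ^ (α - 1) = 1 := by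
    rw [← Real.rpow_add hGpos]; norm_num
  unfold cc MM psiD
  have lhs : -(rr F f v * (1 - F v) ^ (1 - α) *
      (-(f v * (1 - F v) ^ (α - 1) * ((1 + α) * (1 - F v) - α)) / α))
      = ((rr F f v * f v) * ((1 - F v) ^ (1 - α) * (1 - F v) ^ (α - 1)) * ((1 + α) * (1 - F v) - α)) / α := by
    ring
  rw [lhs, hrf, hpow]
  field_simp

lemma cc_contOn {α : ℝ} {F f : ℝ → ℝ} (hcdf : IsCDF F f) {s : Set ℝ}
    (hs : ∀ v ∈ s, 0 ≤ v) : ContinuousOn (cc α F) s := by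
  have hFC : ContinuousOn F s := fun v hv =>
    ((hcdf.hasDeriv v (hs v hv)).continuousAt).continuousWithinAt
  unfold cc
  fun_prop

lemma psiD_contOn {α : ℝ} {F f : ℝ → ℝ} (hcdf : IsCDF F f)
    (hfd : ∀ v, 0 ≤ v → DifferentiableAt ℝ f v) {s : Set ℝ}
    (hs : ∀ v ∈ s, 0 ≤ v) (hs2 : ∀ v ∈ s, F v < 1) :
    ContinuousOn (psiD α F f) s := by
  have hFC : ContinuousOn F s := fun v hv =>
    ((hcdf.hasDeriv v (hs v hv)).continuousAt).continuousWithinAt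
  have hfC : ContinuousOn f s := fun v hv =>
    ((hfd v (hs v hv)).continuousAt).continuousWithinAt
  have hGC : ContinuousOn (fun v => 1 - F v) s := continuousOn_const.sub hFC
  have hrp : ContinuousOn (fun v => (1 - F v) ^ (α - 1)) s :=
    hGC.rpow_const (fun v hv => Or.inl (by have := hs2 v hv; intro h; linarith [sub_eq_zero.mp h]))
  unfold psiD
  exact (((hfC.mul hrp).mul ((continuousOn_const.mul hGC).sub continuousOn_const)).neg).div_const α

lemma integral_cc_ge {α : ℝ} {F f : ℝ → ℝ} (hcdf : IsCDF F f)
    (hfd : ∀ v, 0 ≤ v → DifferentiableAt ℝ f v) (hα0 : 0 < α)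
    {a b K : ℝ} (ha : 0 ≤ a) (hab : a ≤ b) (hFb : F b < 1)
    (hpt : ∀ v ∈ Set.Icc a b, -(K * psiD α F f v) ≤ cc α F v) :
    -(K * (psiF α F b - psiF α F a)) ≤ ∫ v in a..b, cc α F v := by
  have hmem : ∀ v ∈ Set.uIcc a b, 0 ≤ v ∧ F v < 1 := by
    intro v hv
    rw [Set.uIcc_of_le hab] at hv
    exact ⟨le_trans ha hv.1, lt_of_le_of_lt (hcdf.mono hv.2) hFb⟩
  have hint : IntervalIntegrable (psiD α F f) volume a b :=
    (psiD_contOn hcdf hfd (fun v hv => (hmem v hv).1) (fun v hv => (hmem v hv).2)).intervalIntegrable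
  have hFTC : ∫ v in a..b, psiD α F f v = psiF α F b - psiF α F a := by
    refine intervalIntegral.integral_eq_sub_of_hasDerivAt (fun v hv => ?_) hint
    exact psi_hasDeriv hcdf hα0 (hmem v hv).1 (hmem v hv).2
  have hccint : IntervalIntegrable (cc α F) volume a b :=
    (cc_contOn hcdf (f := f) (fun v hv => (hmem v hv).1)).intervalIntegrable
  have hL : IntervalIntegrable (fun v => -(K * psiD α F f v)) volume a b :=
    (hint.const_mul K).neg
  have := intervalIntegral.integral_mono_on hab hL hccint hpt
  calc -(K * (psiF α F b - psiF α F a)) = ∫ v in a..b, -(K * psiD α F f v) := by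
        rw [intervalIntegral.integral_neg, intervalIntegral.integral_const_mul, hFTC]
    _ ≤ _ := this

lemma MM_anti {α : ℝ} {F f : ℝ → ℝ} (hcdf : IsCDF F f)
    (hfd : ∀ v, 0 ≤ v → DifferentiableAt ℝ f v) (hSR : IsAlphaSR α F f)
    {b : ℝ} (hb : 0 ≤ b) (hFb : F b < 1) :
    AntitoneOn (MM α F f) (Set.Icc 0 b) := by
  have hmem : ∀ v ∈ Set.Icc (0:ℝ) b, 0 ≤ v ∧ F v < 1 := fun v hv =>
    ⟨hv.1, lt_of_le_of_lt (hcdf.mono hv.2) hFb⟩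
  have hd : ∀ v ∈ Set.Icc (0:ℝ) b, ∃ m', HasDerivAt (MM α F f) m' v ∧ m' ≤ 0 := fun v hv =>
    MM_deriv_nonpos hcdf hfd hSR (hmem v hv).1 (hmem v hv).2
  refine antitoneOn_of_deriv_nonpos (convex_Icc 0 b) ?_ ?_ ?_
  · intro v hv
    obtain ⟨m', hm', _⟩ := hd v hv
    exact hm'.continuousAt.continuousWithinAt
  · intro v hv
    rw [interior_Icc] at hv
    obtain ⟨m', hm', _⟩ := hd v (Set.mem_Icc_of_Ioo hv)
    exact hm'.differentiableAt.differentiableWithinAt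
  · intro v hv
    rw [interior_Icc] at hv
    obtain ⟨m', hm', hle⟩ := hd v (Set.mem_Icc_of_Ioo hv)
    rw [hm'.deriv]; exact hle

lemma MM_nonneg {α : ℝ} {F f : ℝ → ℝ} (hcdf : IsCDF F f) {v : ℝ}
    (hv : 0 ≤ v) (hFv : F v < 1) : 0 ≤ MM α F f v := by
  have h1 : 0 ≤ rr F f v := div_nonneg (by linarith [hcdf.le_one v]) (hcdf.f_pos v hv hFv).le
  exact mul_nonneg h1 (Real.rpow_nonneg (by linarith [hcdf.le_one v]) _)

lemma head_bound {α : ℝ} {F f : ℝ → ℝ} (hcdf : IsCDF F f)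
    (hfd : ∀ v, 0 ≤ v → DifferentiableAt ℝ f v) (hSR : IsAlphaSR α F f) (hα0 : 0 < α)
    {s : ℝ} (hs0 : 0 ≤ s) (hFs : F s = 1 / (1 + α)) :
    -(MM α F f s * (psiF α F s - psiF α F 0)) ≤ ∫ v in (0:ℝ)..s, cc α F v := by
  have hα1' : (0:ℝ) < 1 + α := by linarith
  have hFs1 : F s < 1 := by rw [hFs]; rw [div_lt_one hα1']; linarith
  refine integral_cc_ge hcdf hfd hα0 le_rfl hs0 hFs1 (fun v hv => ?_)
  have hv0 : 0 ≤ v := hv.1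
  have hFv1 : F v < 1 := lt_of_le_of_lt (hcdf.mono hv.2) hFs1
  have hGv : α / (1 + α) ≤ 1 - F v := by
    have : F v ≤ 1 / (1 + α) := hFs ▸ hcdf.mono hv.2
    rw [le_div_iff₀ hα1'] at this
    rw [div_le_iff₀ hα1']
    nlinarith
  have hpsiD : psiD α F f v ≤ 0 := by
    have h1 : 0 ≤ (1 + α) * (1 - F v) - α := by
      rw [div_le_iff₀ hα1'] at hGv; linarith
    have h2 : 0 ≤ f v := (hcdf.f_pos v hv0 hFv1).le
    have h3 : 0 ≤ (1 - F v) ^ (α - 1) := Real.rpow_nonneg (by linarith [hcdf.le_one v]) _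
    unfold psiD
    apply div_nonpos_of_nonpos_of_nonneg _ hα0.le
    simp only [neg_nonpos]
    positivity
  have hM : MM α F f s ≤ MM α F f v :=
    MM_anti hcdf hfd hSR hs0 hFs1 ⟨hv0, hv.2⟩ ⟨hs0, le_rfl⟩ hv.2
  rw [cc_eq hcdf hα0 hv0 hFv1]
  have := mul_le_mul_of_nonpos_right hM hpsiD
  linarith

lemma tail_bound {α : ℝ} {F f : ℝ → ℝ} (hcdf : IsCDF F f)
    (hfd : ∀ v, 0 ≤ v → DifferentiableAt ℝ f v) (hSR : IsAlphaSR α F f) (hα0 : 0 < α)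
    {s b : ℝ} (hs0 : 0 ≤ s) (hFs : F s = 1 / (1 + α)) (hsb : s ≤ b) (hFb : F b < 1) :
    -(MM α F f s * (psiF α F b - psiF α F s)) ≤ ∫ v in s..b, cc α F v := by
  have hα1' : (0:ℝ) < 1 + α := by linarith
  refine integral_cc_ge hcdf hfd hα0 hs0 hsb hFb (fun v hv => ?_)
  have hv0 : 0 ≤ v := le_trans hs0 hv.1
  have hFv1 : F v < 1 := lt_of_le_of_lt (hcdf.mono hv.2) hFb
  have hFvge : 1 / (1 + α) ≤ F v := hFs ▸ hcdf.mono hv.1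
  have hpsiD : 0 ≤ psiD α F f v := by
    have h1 : (1 + α) * (1 - F v) - α ≤ 0 := by
      rw [div_le_iff₀ hα1'] at hFvge; nlinarith
    have h2 : 0 ≤ f v := (hcdf.f_pos v hv0 hFv1).le
    have h3 : 0 ≤ (1 - F v) ^ (α - 1) := Real.rpow_nonneg (by linarith [hcdf.le_one v]) _
    unfold psiD
    apply div_nonneg _ hα0.le
    simp only [neg_nonneg]
    exact mul_nonpos_of_nonneg_of_nonpos (by positivity) h1
  have hbb0 : 0 ≤ b := le_trans hs0 hsb
  have hM : MM α F f v ≤ MM α F f s :=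
    MM_anti hcdf hfd hSR hbb0 hFb ⟨hs0, hsb⟩ ⟨hv0, hv.2⟩ hv.1
  rw [cc_eq hcdf hα0 hv0 hFv1]
  have := mul_le_mul_of_nonneg_right hM hpsiD
  linarith

lemma psiF_tendsto {α : ℝ} {F : ℝ → ℝ} (hα0 : 0 < α) {l : Filter ℝ}
    (hG : Tendsto (fun v => 1 - F v) l (nhds 0)) : Tendsto (psiF α F) l (nhds 0) := by
  have hphi : ContinuousAt (fun q : ℝ => q ^ α * (q - 1) / α) 0 :=
    ((Real.continuousAt_rpow_const 0 α (Or.inr hα0.le)).mul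
      (continuousAt_id.sub continuousAt_const)).div_const α
  have h := hphi.tendsto.comp hG
  have h0 : (0:ℝ) ^ α * ((0:ℝ) - 1) / α = 0 := by rw [Real.zero_rpow hα0.ne']; ring
  rw [h0] at h
  exact h

theorem max_le_min_bound (α : ℝ) (F f : ℝ → ℝ)
    (hα0 : 0 < α) (hα1 : α < 1)
    (hcdf : IsCDF F f)
    (hfd : ∀ v, 0 ≤ v → DifferentiableAt ℝ f v)
    (hSR : IsAlphaSR α F f)
    (hmean : IntegrableOn (fun v => 1 - F v) (Set.Ioi 0)) :
    ∫ x in Set.Ioi (0 : ℝ), (1 - (F x) ^ 2) ≤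
      ((2 + α) / α) * ∫ x in Set.Ioi (0 : ℝ), (1 - F x) ^ 2 := by
  have hα1' : (0:ℝ) < 1 + α := by linarith
  have hF0 : ∀ v, 0 ≤ v → 0 ≤ F v := fun v hv => hcdf.zero ▸ hcdf.mono hv
  have hGmeas : Measurable (fun v : ℝ => 1 - F v) := measurable_const.sub hcdf.mono.measurable
  have hG2 : IntegrableOn (fun v => (1 - F v)^2) (Set.Ioi 0) := by
    refine hmean.mono' ((hGmeas.pow_const 2).aestronglyMeasurable) ?_
    refine (ae_restrict_iff' measurableSet_Ioi).2 (Eventually.of_forall fun v hv => ?_)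
    have h1 := hF0 v (le_of_lt hv); have h2 := hcdf.le_one v
    rw [Real.norm_eq_abs, abs_of_nonneg (by positivity)]
    nlinarith
  have hcc_int : IntegrableOn (cc α F) (Set.Ioi 0) := by
    have h : cc α F = fun v => ((1+α)/α) * (1 - F v)^2 - (1 - F v) := rfl
    rw [h]; exact (hG2.const_mul _).sub hmean
  -- the crossing point s with F s = 1/(1+α)
  have hlt1 : 1 / (1+α) < 1 := by rw [div_lt_one hα1']; linarith
  obtain ⟨N, hN1, hN0⟩ :=
    ((hcdf.tendsto_one.eventually (eventually_gt_nhds hlt1)).and (eventually_ge_atTop (0:ℝ))).exists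
  have hFcont : ContinuousOn F (Set.Icc 0 N) := fun v hv =>
    ((hcdf.hasDeriv v hv.1).continuousAt).continuousWithinAt
  have hmem : 1/(1+α) ∈ Set.Icc (F 0) (F N) := by
    constructor
    · rw [hcdf.zero]; positivity
    · exact hN1.le
  obtain ⟨s, hsmem, hFs⟩ := intermediate_value_Icc hN0 hFcont hmem
  have hs0 : 0 ≤ s := hsmem.1
  have hFs1 : F s < 1 := by rw [hFs]; exact hlt1
  set K := MM α F f s with hK
  have hK0 : 0 ≤ K := MM_nonneg hcdf hs0 hFs1
  have hpsiF0 : psiF α F 0 = 0 := by unfold psiF; rw [hcdf.zero]; norm_num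
  -- head bound
  have hhead : -(K * psiF α F s) ≤ ∫ v in Set.Ioc 0 s, cc α F v := by
    have h := head_bound hcdf hfd hSR hα0 hs0 hFs
    rw [hpsiF0, sub_zero, intervalIntegral.integral_of_le hs0] at h
    exact h
  -- tail bound
  have htail : K * psiF α F s ≤ ∫ v in Set.Ioi s, cc α F v := by
    by_cases hsupp : ∀ v, F v < 1
    · -- unbounded support
      have hGt : Tendsto (fun v => 1 - F v) atTop (nhds 0) := by
        have h := Tendsto.sub (tendsto_const_nhds (x := (1:ℝ))) hcdf.tendsto_one
        rw [sub_self] at h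
        exact h
      have hψ := psiF_tendsto hα0 hGt
      have T1 : Tendsto (fun b => ∫ v in s..b, cc α F v) atTop
          (nhds (∫ v in Set.Ioi s, cc α F v)) :=
        intervalIntegral_tendsto_integral_Ioi s (hcc_int.mono_set (Set.Ioi_subset_Ioi hs0)) tendsto_id
      have T2 : Tendsto (fun b => -(K * (psiF α F b - psiF α F s))) atTop
          (nhds (K * psiF α F s)) := by
        have h := (((hψ.sub_const (psiF α F s)).const_mul K)).neg
        have h0 : -(K * ((0:ℝ) - psiF α F s)) = K * psiF α F s := by ring
        rw [h0] at h
        exact h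
      have hev : ∀ᶠ b in atTop, -(K * (psiF α F b - psiF α F s)) ≤ ∫ v in s..b, cc α F v := by
        filter_upwards [eventually_ge_atTop s] with b hb
        exact tail_bound hcdf hfd hSR hα0 hs0 hFs hb (hsupp b)
      exact le_of_tendsto_of_tendsto T2 T1 hev
    · -- bounded support
      obtain ⟨v0, hv0⟩ := not_forall.mp hsupp
      have hFv0 : F v0 = 1 := le_antisymm (hcdf.le_one v0) (not_lt.mp hv0)
      set S1 := {v : ℝ | F v = 1} with hS1
      have hne : S1.Nonempty := ⟨v0, hFv0⟩
      have hlb : ∀ x ∈ S1, (0:ℝ) ≤ x := by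
        intro x hx
        by_contra h
        push_neg at h
        have h2 : F x ≤ F 0 := hcdf.mono h.le
        rw [hcdf.zero] at h2
        have : F x = 1 := hx
        linarith
      have hbdd : BddBelow S1 := ⟨0, hlb⟩
      set vb := sInf S1 with hvb
      have hvb0 : 0 ≤ vb := le_csInf hne hlb
      have hltvb : ∀ v, v < vb → F v < 1 := by
        intro v hv
        rcases lt_or_eq_of_le (hcdf.le_one v) with h | h
        · exact h
        · exact absurd (csInf_le hbdd h) (not_le.mpr hv)
      have hFvb : F vb = 1 := by
        by_contra h
        have hlt : F vb < 1 := lt_of_le_of_ne (hcdf.le_one vb) h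
        have hcont : ContinuousAt F vb := (hcdf.hasDeriv vb hvb0).continuousAt
        have hevv : ∀ᶠ w in nhds vb, F w < 1 := hcont.tendsto.eventually_lt_const hlt
        rw [Metric.eventually_nhds_iff] at hevv
        obtain ⟨ε, hε, hball⟩ := hevv
        obtain ⟨x, hx, hxlt⟩ := exists_lt_of_csInf_lt hne (by linarith : sInf S1 < vb + ε)
        have hxge : vb ≤ x := csInf_le hbdd hx
        have hflt : F x < 1 := hball (by rw [Real.dist_eq, abs_lt]; constructor <;> linarith)
        have : F x = 1 := hx
        linarith
      have hsvb : s < vb := by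
        by_contra h
        push_neg at h
        have h2 : F vb ≤ F s := hcdf.mono h
        rw [hFvb] at h2
        linarith
      set C := (1+α)/α + 1 with hC
      have hCb : ∀ v, 0 ≤ v → ‖cc α F v‖ ≤ C := by
        intro v hv
        have h1 := hF0 v hv
        have h2 := hcdf.le_one v
        have h3 : (0:ℝ) ≤ (1+α)/α := by positivity
        have h4 : (1 - F v)^2 ≤ 1 := by nlinarith
        have h5 : (1+α)/α * (1 - F v)^2 ≤ (1+α)/α * 1 := mul_le_mul_of_nonneg_left h4 h3
        have h6 : 0 ≤ (1+α)/α * (1 - F v)^2 := mul_nonneg h3 (sq_nonneg _)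
        rw [Real.norm_eq_abs, abs_le]
        unfold cc
        constructor <;> linarith
      have hII : ∀ a b : ℝ, 0 ≤ a → a ≤ b → IntervalIntegrable (cc α F) volume a b := by
        intro a b ha hab
        exact (cc_contOn hcdf (f := f)
          (fun v hv => by rw [Set.uIcc_of_le hab] at hv; linarith [hv.1])).intervalIntegrable
      have hIone : ∀ b, b ∈ Set.Ico s vb →
          -(K * (psiF α F b - psiF α F s)) - C * (vb - b) ≤ ∫ v in s..vb, cc α F v := by
        intro b hb
        have h1 := tail_bound hcdf hfd hSR hα0 hs0 hFs hb.1 (hltvb b hb.2)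
        have hadj : (∫ v in s..b, cc α F v) + ∫ v in b..vb, cc α F v = ∫ v in s..vb, cc α F v :=
          intervalIntegral.integral_add_adjacent_intervals (hII s b hs0 hb.1)
            (hII b vb (le_trans hs0 hb.1) hb.2.le)
        have hnorm : ‖∫ v in b..vb, cc α F v‖ ≤ C * |vb - b| := by
          refine intervalIntegral.norm_integral_le_of_norm_le_const (fun x hx => ?_)
          rw [Set.uIoc_of_le hb.2.le] at hx
          exact hCb x (le_trans (le_trans hs0 hb.1) hx.1.le)
        have habs : |vb - b| = vb - b := abs_of_nonneg (by linarith [hb.2.le])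
        rw [Real.norm_eq_abs, habs] at hnorm
        have h2 : -(C * (vb - b)) ≤ ∫ v in b..vb, cc α F v := neg_le_of_abs_le hnorm
        linarith
      have hψc : Tendsto (psiF α F) (nhds vb) (nhds 0) := by
        have hFcontb : ContinuousAt F vb := (hcdf.hasDeriv vb hvb0).continuousAt
        have hGt : Tendsto (fun v => 1 - F v) (nhds vb) (nhds (1 - F vb)) :=
          Tendsto.sub tendsto_const_nhds hFcontb.tendsto
        rw [hFvb, sub_self] at hGt
        exact psiF_tendsto hα0 hGt
      have Tl : Tendsto (fun b => -(K * (psiF α F b - psiF α F s)) - C * (vb - b))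
          (nhdsWithin vb (Set.Iio vb)) (nhds (K * psiF α F s)) := by
        have t1 : Tendsto (fun b => -(K * (psiF α F b - psiF α F s))) (nhds vb)
            (nhds (K * psiF α F s)) := by
          have h := (((hψc.sub_const (psiF α F s)).const_mul K)).neg
          have h0 : -(K * ((0:ℝ) - psiF α F s)) = K * psiF α F s := by ring
          rw [h0] at h; exact h
        have t2 : Tendsto (fun b : ℝ => C * (vb - b)) (nhds vb) (nhds 0) := by
          have hc : Continuous (fun b : ℝ => C * (vb - b)) := by continuity
          have h := hc.tendsto vb
          simpa using h
        have h := t1.sub t2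
        rw [sub_zero] at h
        exact h.mono_left nhdsWithin_le_nhds
      have hevb : ∀ᶠ b in nhdsWithin vb (Set.Iio vb),
          -(K * (psiF α F b - psiF α F s)) - C * (vb - b) ≤ ∫ v in s..vb, cc α F v := by
        filter_upwards [self_mem_nhdsWithin,
          ((eventually_ge_nhds hsvb).filter_mono nhdsWithin_le_nhds)] with b h1 h2
        exact hIone b ⟨h2, h1⟩
      have hlim : K * psiF α F s ≤ ∫ v in s..vb, cc α F v := le_of_tendsto Tl hevb
      have hz : ∫ v in Set.Ioi vb, cc α F v = 0 := by
        have heq : Set.EqOn (cc α F) (fun _ => (0:ℝ)) (Set.Ioi vb) := by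
          intro v hv
          have h1 : F v = 1 :=
            le_antisymm (hcdf.le_one v) (by rw [← hFvb]; exact hcdf.mono (le_of_lt hv))
          show cc α F v = 0
          unfold cc; rw [h1]; ring
        rw [setIntegral_congr_fun measurableSet_Ioi heq, integral_zero]
      have hsub1 : Set.Ioc s vb ⊆ Set.Ioi (0:ℝ) := fun x hx => lt_of_le_of_lt hs0 hx.1
      have hsub2 : Set.Ioi vb ⊆ Set.Ioi (0:ℝ) := Set.Ioi_subset_Ioi hvb0
      have hsplit : ∫ v in Set.Ioi s, cc α F v
          = (∫ v in Set.Ioc s vb, cc α F v) + ∫ v in Set.Ioi vb, cc α F v := by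
        rw [← Set.Ioc_union_Ioi_eq_Ioi hsvb.le,
          setIntegral_union (Set.Ioc_disjoint_Ioi le_rfl) measurableSet_Ioi
            (hcc_int.mono_set hsub1) (hcc_int.mono_set hsub2)]
      rw [hsplit, hz, add_zero, ← intervalIntegral.integral_of_le hsvb.le]
      exact hlim
  -- combine
  have hJ : 0 ≤ ∫ v in Set.Ioi (0:ℝ), cc α F v := by
    rw [← Set.Ioc_union_Ioi_eq_Ioi hs0,
      setIntegral_union (Set.Ioc_disjoint_Ioi le_rfl) measurableSet_Ioi
        (hcc_int.mono_set Set.Ioc_subset_Ioi_self) (hcc_int.mono_set (Set.Ioi_subset_Ioi hs0))]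
    linarith
  have hJ' : ∫ v in Set.Ioi (0:ℝ), cc α F v
      = ((1+α)/α) * (∫ v in Set.Ioi (0:ℝ), (1 - F v)^2) - ∫ v in Set.Ioi (0:ℝ), (1 - F v) := by
    have h : cc α F = fun v => ((1+α)/α) * (1 - F v)^2 - (1 - F v) := rfl
    rw [h, integral_sub (hG2.const_mul _) hmean, integral_const_mul]
  have hB0 : 0 ≤ ∫ v in Set.Ioi (0:ℝ), (1 - F v)^2 :=
    setIntegral_nonneg measurableSet_Ioi (fun v _ => sq_nonneg _)
  have hLHS : ∫ x in Set.Ioi (0:ℝ), (1 - F x ^ 2)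
      = 2 * (∫ v in Set.Ioi (0:ℝ), (1 - F v)) - ∫ v in Set.Ioi (0:ℝ), (1 - F v)^2 := by
    rw [setIntegral_congr_fun measurableSet_Ioi
      (g := fun x => 2*(1 - F x) - (1 - F x)^2) (fun x _ => by ring)]
    rw [integral_sub (hmean.const_mul 2) hG2, integral_const_mul]
  set A := ∫ v in Set.Ioi (0:ℝ), (1 - F v) with hA
  set B := ∫ v in Set.Ioi (0:ℝ), (1 - F v)^2 with hB
  rw [hLHS]
  rw [hJ'] at hJ
  have hprod : α * A ≤ (1+α) * B := by
    have h2 : A ≤ (1+α)/α * B := by linarith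
    have h3 := mul_le_mul_of_nonneg_left h2 hα0.le
    have h4 : α * ((1+α)/α * B) = (1+α) * B := by field_simp
    rw [h4] at h3
    linarith
  rw [div_mul_eq_mul_div, le_div_iff₀ hα0]
  nlinarith [hprod]
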